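/- Let ξ = X^1 − x for the one-dimensional skew-symmetric scheme X^1 = x + b·√(Δt)·σ(x)·ν, where ν ~ N(0,1) and P(b = +1 | ν) = p(x,ν), P(b = −1 | ν) = 1 − p(x,ν). Then ξ has Lebesgue density γ(x,ξ) = [p(x, ξ/(√(Δt)σ(x))) + 1 − p(x, −ξ/(√(Δt)σ(x)))] · (√(Δt)σ(x))^{−1} · φ(ξ/(√(Δt)σ(x))), where φ is the standard normal density. In particular, replacing p by p̃(x,ν) := (p(x,ν) + 1 − p(x,−ν))/2 yields the same law for ξ, and p̃(x,0) = 1/2. -/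

import Mathlib

open MeasureTheory ProbabilityTheory Real
open scoped ENNReal NNReal

lemma map_mul_withDensity (c : ℝ) (hc : c ≠ 0) (μ : Measure ℝ) (f : ℝ → ℝ≥0∞)
    (hf : Measurable f) :
    Measure.map (fun ν => c * ν) (μ.withDensity f) =
      (Measure.map (fun ν => c * ν) μ).withDensity (fun ξ => f (c⁻¹ * ξ)) := by
  ext s hs
  rw [Measure.map_apply (measurable_const_mul c) hs,
      withDensity_apply _ ((measurable_const_mul c) hs),
      withDensity_apply _ hs,
      setLIntegral_map hs
        (show Measurable fun ξ => f (c⁻¹ * ξ) from hf.comp (measurable_const_mul c⁻¹))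
        (measurable_const_mul c)]
  simp_rw [inv_mul_cancel_left₀ hc]

lemma skew_map_density (c : ℝ) (hc : c ≠ 0) (q : ℝ → ℝ) (hq : Measurable q) :
    Measure.map (fun ν => c * ν)
        ((gaussianReal 0 1).withDensity fun ν => ENNReal.ofReal (q ν)) =
      volume.withDensity
        (fun ξ => ENNReal.ofReal |c⁻¹| *
          (gaussianPDF 0 1 (c⁻¹ * ξ) * ENNReal.ofReal (q (c⁻¹ * ξ)))) := by
  have hg : Measurable (gaussianPDF 0 1) := measurable_gaussianPDF 0 1
  have hq' : Measurable fun ν => ENNReal.ofReal (q ν) := hq.ennreal_ofReal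
  rw [gaussianReal_of_var_ne_zero _ one_ne_zero, ← withDensity_mul _ hg hq',
      show (gaussianPDF 0 1 * fun ν => ENNReal.ofReal (q ν))
          = fun ν => gaussianPDF 0 1 ν * ENNReal.ofReal (q ν) from rfl,
      map_mul_withDensity c hc _ (fun ν => gaussianPDF 0 1 ν * ENNReal.ofReal (q ν)) (hg.mul hq'), Real.map_volume_mul_left hc,
      withDensity_smul_measure]
  rw [← withDensity_smul' _ _ ENNReal.ofReal_ne_top]
  rfl

lemma skew_law_eq (s : ℝ) (hs : 0 < s) (q : ℝ → ℝ) (hq : Measurable q)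
    (hq01 : ∀ ν : ℝ, q ν ∈ Set.Icc (0 : ℝ) 1) :
    Measure.map (fun ν => s * ν)
          ((gaussianReal 0 1).withDensity fun ν => ENNReal.ofReal (q ν))
        + Measure.map (fun ν => -(s * ν))
          ((gaussianReal 0 1).withDensity fun ν => ENNReal.ofReal (1 - q ν))
      = volume.withDensity (fun ξ => ENNReal.ofReal
          ((q (ξ / s) + 1 - q (-ξ / s)) * (1 / s) *
            ((Real.sqrt (2 * Real.pi))⁻¹ * Real.exp (-(ξ / s) ^ 2 / 2)))) := by
  have hs0 : s ≠ 0 := ne_of_gt hs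
  have hns0 : (-s : ℝ) ≠ 0 := by simpa using hs0
  have h1 : (fun ν : ℝ => -(s * ν)) = fun ν : ℝ => (-s) * ν := by
    funext ν; ring
  rw [h1, skew_map_density s hs0 q hq,
      skew_map_density (-s) hns0 (fun ν => 1 - q ν) (measurable_const.sub hq),
      ← withDensity_add_right]
  · congr 1
    funext ξ
    simp only [neg_div]
    have e1 : s⁻¹ * ξ = ξ / s := (div_eq_inv_mul ξ s).symm
    have e2 : (-s)⁻¹ * ξ = -(ξ / s) := by
      rw [inv_neg, neg_mul, ← div_eq_inv_mul]
    have habs : |s⁻¹| = 1 / s := by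
      rw [abs_of_pos (inv_pos.mpr hs), one_div]
    have habs2 : |(-s)⁻¹| = 1 / s := by
      rw [inv_neg, abs_neg, habs]
    have hpdf : ∀ t : ℝ, gaussianPDF 0 1 t =
        ENNReal.ofReal ((Real.sqrt (2 * Real.pi))⁻¹ * Real.exp (-t ^ 2 / 2)) := by
      intro t
      rw [gaussianPDF]
      congr 1
      simp [gaussianPDFReal]
    have hφ0 : (0:ℝ) ≤ (Real.sqrt (2 * Real.pi))⁻¹ * Real.exp (-(ξ / s) ^ 2 / 2) := by
      positivity
    have hinv0 : (0:ℝ) ≤ 1 / s := by positivity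
    have hq1 := (hq01 (ξ / s)).1
    have hq2 := (hq01 (ξ / s)).2
    have hq3 := (hq01 (-(ξ / s))).1
    have hq4 := (hq01 (-(ξ / s))).2
    rw [Pi.add_apply, e1, e2, habs, habs2, hpdf, hpdf, neg_sq]
    rw [← ENNReal.ofReal_mul hφ0, ← ENNReal.ofReal_mul hinv0,
        ← ENNReal.ofReal_mul hφ0, ← ENNReal.ofReal_mul hinv0,
        ← ENNReal.ofReal_add (by positivity)
          (mul_nonneg hinv0 (mul_nonneg hφ0 (by linarith)))]
    congr 1
    ring
  · exact ((((measurable_gaussianPDF 0 1).comp (measurable_const_mul (-s)⁻¹)).mul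
      ((measurable_const.sub
        (hq.comp (measurable_const_mul (-s)⁻¹))).ennreal_ofReal)).const_mul _)

/-- The increment `ξ = X¹ - x` of the one-dimensional skew-symmetric scheme:
with `ν ~ N(0,1)`, `P(b = +1 | ν) = p(x,ν)`, and `ξ = b √Δt σ(x) ν`, the law
of `ξ` (written as the mixture of the two pushforwards weighted by `p` and
`1 - p`) has Lebesgue density
`γ(x,ξ) = [p(x, ξ/(√Δt σ(x))) + 1 - p(x, -ξ/(√Δt σ(x)))] (√Δt σ(x))⁻¹ φ(ξ/(√Δt σ(x)))`.
Moreover, replacing `p` by `p̃(x,ν) = (p(x,ν) + 1 - p(x,-ν))/2` yields the same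
law for `ξ`, and `p̃(x,0) = 1/2`. -/
theorem skew_increment_density (x Δt σx : ℝ) (hΔt : 0 < Δt) (hσ : 0 < σx)
    (p : ℝ → ℝ → ℝ) (hp_cont : Continuous fun ν => p x ν)
    (hp01 : ∀ ν : ℝ, p x ν ∈ Set.Icc (0 : ℝ) 1) :
    let s : ℝ := Real.sqrt Δt * σx
    let φ : ℝ → ℝ := fun t => (Real.sqrt (2 * Real.pi))⁻¹ * Real.exp (-t ^ 2 / 2)
    let γ : ℝ → ℝ := fun ξ => (p x (ξ / s) + 1 - p x (-ξ / s)) * (1 / s) * φ (ξ / s)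
    let lawξ : (ℝ → ℝ → ℝ) → Measure ℝ := fun q =>
      Measure.map (fun ν => s * ν)
          ((gaussianReal 0 1).withDensity fun ν => ENNReal.ofReal (q x ν))
        + Measure.map (fun ν => -(s * ν))
          ((gaussianReal 0 1).withDensity fun ν => ENNReal.ofReal (1 - q x ν))
    let ptilde : ℝ → ℝ → ℝ := fun y ν => (p y ν + 1 - p y (-ν)) / 2
    lawξ p = volume.withDensity (fun ξ => ENNReal.ofReal (γ ξ)) ∧
      lawξ ptilde = lawξ p ∧ ptilde x 0 = 1 / 2 := by
  intro s φ γ lawξ ptilde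
  have hs : 0 < s := mul_pos (Real.sqrt_pos.mpr hΔt) hσ
  have hpm : Measurable fun ν => p x ν := hp_cont.measurable
  have hptm : Measurable fun ν => ptilde x ν := by
    have : Continuous fun ν => ptilde x ν := by
      exact ((hp_cont.add continuous_const).sub
        (hp_cont.comp continuous_neg)).div_const 2
    exact this.measurable
  have hpt01 : ∀ ν : ℝ, ptilde x ν ∈ Set.Icc (0 : ℝ) 1 := by
    intro ν
    have h1 := hp01 ν
    have h2 := hp01 (-ν)
    constructor
    · simp only [ptilde]
      nlinarith [h1.1, h1.2, h2.1, h2.2]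
    · simp only [ptilde]
      nlinarith [h1.1, h1.2, h2.1, h2.2]
  have key := skew_law_eq s hs (fun ν => p x ν) hpm hp01
  have keyt := skew_law_eq s hs (fun ν => ptilde x ν) hptm hpt01
  refine ⟨key, ?_, ?_⟩
  · rw [show lawξ ptilde = _ from keyt, show lawξ p = _ from key]
    congr 1
    funext ξ
    congr 1
    have : ptilde x (ξ / s) + 1 - ptilde x (-ξ / s)
        = p x (ξ / s) + 1 - p x (-ξ / s) := by
      simp only [ptilde]
      have : -(-ξ / s) = ξ / s := by ring
      rw [this]
      ring
    rw [this]
  · simp only [ptilde, neg_zero]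
    ring
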